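/- For every prime p > 3, in (ZMod p)[t] one has £^{OY}_{(1,1,1)}(t) = (1/6) £_1(t)^3 + (1/3) Z(1,2) \cdot t^p (1-t)^p, where Z(1,2) := \sum_{0<n_1<n_2<p} n_1^{-1} n_2^{-2} in ZMod p. -/
import Mathlib


open Polynomial Finset

/-- £₁(t). -/
noncomputable def L1 (p : ℕ) : Polynomial (ZMod p) :=
  ∑ l ∈ Ico 1 p, C ((l : ZMod p)⁻¹) * X ^ l

/-- £^OY_{(1,1,1)} with tˢ replaced by uˢ for a polynomial u. -/
noncomputable def OY111 (p : ℕ) (u : Polynomial (ZMod p)) : Polynomial (ZMod p) :=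
  ∑ l1 ∈ Ico 1 p, ∑ l2 ∈ Ico 1 p, ∑ l3 ∈ Ico 1 p,
    if ¬ p ∣ l1 ∧ ¬ p ∣ (l1 + l2) ∧ ¬ p ∣ (l1 + l2 + l3) then
      C ((l1 : ZMod p)⁻¹ * ((l1 + l2 : ℕ) : ZMod p)⁻¹ * ((l1 + l2 + l3 : ℕ) : ZMod p)⁻¹)
        * u ^ (l1 + l2 + l3)
    else 0

/-- The finite double zeta value ζ(1,2) mod p. -/
def Z12 (p : ℕ) : ZMod p :=
  ∑ n2 ∈ Ico 1 p, ∑ n1 ∈ Ico 1 n2, (n1 : ZMod p)⁻¹ * ((n2 : ZMod p)⁻¹) ^ 2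

/-! ### Auxiliary lemmas -/

section Aux

lemma sum3_swap12 {M : Type*} [AddCommMonoid M] (s : Finset ℕ) (g : ℕ → ℕ → ℕ → M) :
    (∑ a ∈ s, ∑ b ∈ s, ∑ c ∈ s, g a b c) = ∑ a ∈ s, ∑ b ∈ s, ∑ c ∈ s, g b a c :=
  Finset.sum_comm

lemma sum3_swap23 {M : Type*} [AddCommMonoid M] (s : Finset ℕ) (g : ℕ → ℕ → ℕ → M) :
    (∑ a ∈ s, ∑ b ∈ s, ∑ c ∈ s, g a b c) = ∑ a ∈ s, ∑ b ∈ s, ∑ c ∈ s, g a c b :=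
  Finset.sum_congr rfl fun _ _ => Finset.sum_comm

lemma sum3_cycle {M : Type*} [AddCommMonoid M] (s : Finset ℕ) (g : ℕ → ℕ → ℕ → M) :
    (∑ a ∈ s, ∑ b ∈ s, ∑ c ∈ s, g a b c) = ∑ a ∈ s, ∑ b ∈ s, ∑ c ∈ s, g b c a := by
  rw [sum3_swap23 s g]; exact sum3_swap12 s fun x y z => g x z y

lemma sum3_cycle2 {M : Type*} [AddCommMonoid M] (s : Finset ℕ) (g : ℕ → ℕ → ℕ → M) :
    (∑ a ∈ s, ∑ b ∈ s, ∑ c ∈ s, g a b c) = ∑ a ∈ s, ∑ b ∈ s, ∑ c ∈ s, g c a b := by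
  rw [sum3_cycle s g]; exact sum3_cycle s fun x y z => g y z x

lemma sum3_swap13 {M : Type*} [AddCommMonoid M] (s : Finset ℕ) (g : ℕ → ℕ → ℕ → M) :
    (∑ a ∈ s, ∑ b ∈ s, ∑ c ∈ s, g a b c) = ∑ a ∈ s, ∑ b ∈ s, ∑ c ∈ s, g c b a := by
  rw [sum3_swap12 s g]; exact sum3_cycle s fun x y z => g y x z

lemma pair_inv {K : Type*} [Field K] [DecidableEq K] (A B : K) (hA : A ≠ 0) (hB : B ≠ 0) :
    A⁻¹ * (A + B)⁻¹ + B⁻¹ * (A + B)⁻¹ = A⁻¹ * B⁻¹ - (if A + B = 0 then A⁻¹ * B⁻¹ else 0) := by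
  by_cases h : A + B = 0
  · simp [h]
  · rw [if_neg h]; field_simp; ring

lemma key_id {K : Type*} [Field K] [DecidableEq K] (A B C : K)
    (hA : A ≠ 0) (hB : B ≠ 0) (hC : C ≠ 0) :
    A⁻¹ * (A + B)⁻¹ * (A + B + C)⁻¹ + B⁻¹ * (B + A)⁻¹ * (B + A + C)⁻¹
      + A⁻¹ * (A + C)⁻¹ * (A + C + B)⁻¹ + C⁻¹ * (C + A)⁻¹ * (C + A + B)⁻¹
      + B⁻¹ * (B + C)⁻¹ * (B + C + A)⁻¹ + C⁻¹ * (C + B)⁻¹ * (C + B + A)⁻¹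
    = A⁻¹ * B⁻¹ * C⁻¹ - (if A + B + C = 0 then A⁻¹ * B⁻¹ * C⁻¹ else 0)
      - (A + B + C)⁻¹ * ((if A + B = 0 then A⁻¹ * B⁻¹ else 0)
          + (if B + C = 0 then B⁻¹ * C⁻¹ else 0) + (if A + C = 0 then A⁻¹ * C⁻¹ else 0)) := by
  have hL : A⁻¹ * (A + B)⁻¹ * (A + B + C)⁻¹ + B⁻¹ * (B + A)⁻¹ * (B + A + C)⁻¹
      + A⁻¹ * (A + C)⁻¹ * (A + C + B)⁻¹ + C⁻¹ * (C + A)⁻¹ * (C + A + B)⁻¹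
      + B⁻¹ * (B + C)⁻¹ * (B + C + A)⁻¹ + C⁻¹ * (C + B)⁻¹ * (C + B + A)⁻¹
      = ((A⁻¹ * (A + B)⁻¹ + B⁻¹ * (A + B)⁻¹) + (B⁻¹ * (B + C)⁻¹ + C⁻¹ * (B + C)⁻¹)
          + (A⁻¹ * (A + C)⁻¹ + C⁻¹ * (A + C)⁻¹)) * (A + B + C)⁻¹ := by
    ring_nf
  rw [hL, pair_inv A B hA hB, pair_inv B C hB hC, pair_inv A C hA hC]
  by_cases hn : A + B + C = 0
  · simp [hn]
  · rw [if_neg hn]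
    have hS : (A⁻¹ * B⁻¹ + B⁻¹ * C⁻¹ + A⁻¹ * C⁻¹) * (A + B + C)⁻¹ = A⁻¹ * B⁻¹ * C⁻¹ := by
      have h1 : A⁻¹ * B⁻¹ + B⁻¹ * C⁻¹ + A⁻¹ * C⁻¹ = A⁻¹ * B⁻¹ * C⁻¹ * (A + B + C) := by
        field_simp
        ring
      rw [h1, mul_assoc, mul_inv_cancel₀ hn, mul_one]
    calc (A⁻¹ * B⁻¹ - (if A + B = 0 then A⁻¹ * B⁻¹ else 0)
            + (B⁻¹ * C⁻¹ - (if B + C = 0 then B⁻¹ * C⁻¹ else 0))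
            + (A⁻¹ * C⁻¹ - (if A + C = 0 then A⁻¹ * C⁻¹ else 0))) * (A + B + C)⁻¹
        = (A⁻¹ * B⁻¹ + B⁻¹ * C⁻¹ + A⁻¹ * C⁻¹) * (A + B + C)⁻¹
          - (A + B + C)⁻¹ * ((if A + B = 0 then A⁻¹ * B⁻¹ else 0)
            + (if B + C = 0 then B⁻¹ * C⁻¹ else 0) + (if A + C = 0 then A⁻¹ * C⁻¹ else 0)) := by
          ring
      _ = _ := by rw [hS]; ring

lemma window1 {p x : ℕ} (h : p ∣ x) (h1 : 0 < x) (h2 : x < 2 * p) : x = p := by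
  obtain ⟨k, rfl⟩ := h
  have hk0 : 0 < k := by
    rcases Nat.eq_zero_or_pos k with rfl | h
    · simp at h1
    · exact h
  have hk2 : k < 2 := by
    by_contra h'
    push_neg at h'
    have := Nat.mul_le_mul_left p h'
    omega
  have : k = 1 := by omega
  simp [this]

lemma window2 {p x : ℕ} (h : p ∣ x) (h1 : p < x) (h2 : x < 3 * p) : x = 2 * p := by
  obtain ⟨k, rfl⟩ := h
  have hk2 : 2 ≤ k := by
    by_contra h'
    push_neg at h'
    interval_cases k <;> omega
  have hk3 : k < 3 := by
    by_contra h'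
    push_neg at h'
    have := Nat.mul_le_mul_left p h'
    omega
  have : k = 2 := by omega
  rw [this, Nat.mul_comm]

lemma cast_ne_zero_of_mem {p a : ℕ} (ha : a ∈ Ico 1 p) : (a : ZMod p) ≠ 0 := by
  simp only [mem_Ico] at ha
  rw [Ne, ZMod.natCast_eq_zero_iff]
  intro hd
  have := Nat.le_of_dvd (by omega) hd
  omega

lemma cast_sub_self {p a : ℕ} (ha : a ≤ p) : ((p - a : ℕ) : ZMod p) = -(a : ZMod p) := by
  rw [Nat.cast_sub ha, ZMod.natCast_self]; ring

lemma sum_inv_sq {p : ℕ} (hp : p.Prime) (h3 : 3 < p) :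
    ∑ a ∈ Ico 1 p, ((a : ZMod p)⁻¹) ^ 2 = 0 := by
  haveI : Fact p.Prime := ⟨hp⟩
  have h1 : ∑ a ∈ Ico 1 p, ((a : ZMod p)⁻¹) ^ 2 = ∑ a ∈ range p, ((a : ZMod p)⁻¹) ^ 2 := by
    apply Finset.sum_subset
    · intro x hx
      simp only [mem_Ico, mem_range] at *
      omega
    · intro x hx hnx
      have : x = 0 := by simp only [mem_Ico, mem_range] at *; omega
      simp [this]
  have h2 : ∑ a ∈ range p, ((a : ZMod p)⁻¹) ^ 2 = ∑ x : ZMod p, (x⁻¹) ^ 2 := by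
    refine Finset.sum_nbij' (i := fun a => ((a : ZMod p))) (j := fun x => x.val) ?_ ?_ ?_ ?_ ?_
    · intros; exact mem_univ _
    · intro x _
      simp only [mem_range]
      exact ZMod.val_lt x
    · intro a ha
      simp only [mem_range] at ha
      exact ZMod.val_cast_of_lt ha
    · intro x _
      simp
    · intros; rfl
  have h3' : ∑ x : ZMod p, (x⁻¹ : ZMod p) ^ 2 = ∑ x : ZMod p, x ^ 2 :=
    Equiv.sum_comp (Equiv.inv (ZMod p)) (fun x => x ^ 2)
  have h4 : ∑ x : ZMod p, (x : ZMod p) ^ 2 = 0 :=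
    FiniteField.sum_pow_lt_card_sub_one (ZMod p) 2 (by rw [ZMod.card]; omega)
  rw [h1, h2, h3', h4]

lemma sum_neg_inv_sq {p : ℕ} (hp : p.Prime) (h3 : 3 < p) :
    ∑ a ∈ Ico 1 p, C (-((a : ZMod p)⁻¹ * (a : ZMod p)⁻¹)) = (0 : Polynomial (ZMod p)) := by
  rw [← map_sum]
  have h1 : ∑ a ∈ Ico 1 p, -((a : ZMod p)⁻¹ * (a : ZMod p)⁻¹)
      = -∑ a ∈ Ico 1 p, ((a : ZMod p)⁻¹) ^ 2 := by
    rw [← Finset.sum_neg_distrib]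
    apply Finset.sum_congr rfl; intros; ring
  rw [h1, sum_inv_sq hp h3]
  simp

lemma Z12_eq (p : ℕ) :
    Z12 p = ∑ q ∈ (Ico 1 p ×ˢ Ico 1 p).filter (fun q => q.1 < q.2),
      ((q.1 : ZMod p))⁻¹ * (((q.2 : ZMod p))⁻¹) ^ 2 := by
  rw [Finset.sum_filter, Finset.sum_product]
  rw [Finset.sum_comm]
  unfold Z12
  apply Finset.sum_congr rfl
  intro n2 hn2
  simp only [mem_Ico] at hn2
  rw [← Finset.sum_filter]
  congr 1
  rw [Finset.Ico_filter_lt_of_le_right (le_of_lt hn2.2)]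

lemma split_frac {K : Type*} [Field K] (A B : K) (hA : A ≠ 0) (hB : B ≠ 0) (hAB : A + B ≠ 0) :
    A⁻¹ * B⁻¹ * (A + B)⁻¹ = A⁻¹ * ((A + B)⁻¹) ^ 2 + B⁻¹ * ((A + B)⁻¹) ^ 2 := by
  field_simp
  ring

lemma W_lt (p : ℕ) (hp : p.Prime) :
    ∑ q ∈ (Ico 1 p ×ˢ Ico 1 p).filter (fun q => q.1 + q.2 < p),
      ((q.1 : ZMod p))⁻¹ * ((q.2 : ZMod p))⁻¹ * ((q.1 : ZMod p) + (q.2 : ZMod p))⁻¹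
    = 2 * Z12 p := by
  haveI : Fact p.Prime := ⟨hp⟩
  have hmem : ∀ q ∈ (Ico 1 p ×ˢ Ico 1 p).filter (fun q => q.1 + q.2 < p),
      (q.1 : ZMod p) ≠ 0 ∧ (q.2 : ZMod p) ≠ 0 ∧ (q.1 : ZMod p) + (q.2 : ZMod p) ≠ 0 := by
    intro q hq
    simp only [mem_filter, mem_product, mem_Ico] at hq
    refine ⟨?_, ?_, ?_⟩
    · rw [Ne, ZMod.natCast_eq_zero_iff]
      intro hd; have := Nat.le_of_dvd (by omega) hd; omega
    · rw [Ne, ZMod.natCast_eq_zero_iff]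
      intro hd; have := Nat.le_of_dvd (by omega) hd; omega
    · rw [show (q.1 : ZMod p) + (q.2 : ZMod p) = ((q.1 + q.2 : ℕ) : ZMod p) by push_cast; ring]
      rw [Ne, ZMod.natCast_eq_zero_iff]
      intro hd; have := Nat.le_of_dvd (by omega) hd; omega
  rw [Finset.sum_congr rfl
    (fun q hq => split_frac _ _ (hmem q hq).1 (hmem q hq).2.1 (hmem q hq).2.2)]
  rw [Finset.sum_add_distrib]
  have h1 : ∑ q ∈ (Ico 1 p ×ˢ Ico 1 p).filter (fun q => q.1 + q.2 < p),
      ((q.1 : ZMod p))⁻¹ * (((q.1 : ZMod p) + (q.2 : ZMod p))⁻¹) ^ 2 = Z12 p := by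
    rw [Z12_eq]
    refine Finset.sum_nbij' (i := fun q => (q.1, q.1 + q.2)) (j := fun r => (r.1, r.2 - r.1))
      ?_ ?_ ?_ ?_ ?_
    · intro q hq
      simp only [mem_filter, mem_product, mem_Ico] at *
      omega
    · intro r hr
      simp only [mem_filter, mem_product, mem_Ico] at *
      omega
    · rintro ⟨a, b⟩ hq
      simp only [mem_filter, mem_product, mem_Ico] at hq
      simp only [Prod.mk.injEq, true_and, and_true]
      omega
    · rintro ⟨a, b⟩ hr
      simp only [mem_filter, mem_product, mem_Ico] at hr
      simp only [Prod.mk.injEq, true_and, and_true]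
      omega
    · intro q hq
      push_cast
      ring
  have h2 : ∑ q ∈ (Ico 1 p ×ˢ Ico 1 p).filter (fun q => q.1 + q.2 < p),
      ((q.2 : ZMod p))⁻¹ * (((q.1 : ZMod p) + (q.2 : ZMod p))⁻¹) ^ 2
      = ∑ q ∈ (Ico 1 p ×ˢ Ico 1 p).filter (fun q => q.1 + q.2 < p),
      ((q.1 : ZMod p))⁻¹ * (((q.1 : ZMod p) + (q.2 : ZMod p))⁻¹) ^ 2 := by
    refine Finset.sum_nbij' (i := fun q => (q.2, q.1)) (j := fun q => (q.2, q.1)) ?_ ?_ ?_ ?_ ?_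
    · intro q hq
      simp only [mem_filter, mem_product, mem_Ico] at *
      omega
    · intro q hq
      simp only [mem_filter, mem_product, mem_Ico] at *
      omega
    · intros; rfl
    · intros; rfl
    · intro q hq
      push_cast
      ring
  rw [h1, h2, h1]
  ring

lemma W_gt (p : ℕ) (hp : p.Prime) :
    ∑ q ∈ (Ico 1 p ×ˢ Ico 1 p).filter (fun q => p < q.1 + q.2),
      ((q.1 : ZMod p))⁻¹ * ((q.2 : ZMod p))⁻¹ * ((q.1 : ZMod p) + (q.2 : ZMod p))⁻¹
    = -(2 * Z12 p) := by
  haveI : Fact p.Prime := ⟨hp⟩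
  rw [← W_lt p hp, ← Finset.sum_neg_distrib]
  refine Finset.sum_nbij' (i := fun q => (p - q.1, p - q.2)) (j := fun q => (p - q.1, p - q.2))
    ?_ ?_ ?_ ?_ ?_
  · intro q hq
    simp only [mem_filter, mem_product, mem_Ico] at *
    omega
  · intro q hq
    simp only [mem_filter, mem_product, mem_Ico] at *
    omega
  · rintro ⟨a, b⟩ hq
    simp only [mem_filter, mem_product, mem_Ico] at hq
    simp only [Prod.mk.injEq, true_and, and_true]
    omega
  · rintro ⟨a, b⟩ hq
    simp only [mem_filter, mem_product, mem_Ico] at hq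
    simp only [Prod.mk.injEq, true_and, and_true]
    omega
  · intro q hq
    simp only [mem_filter, mem_product, mem_Ico] at hq
    have e1 : ((p - q.1 : ℕ) : ZMod p) = -(q.1 : ZMod p) := cast_sub_self (by omega)
    have e2 : ((p - q.2 : ℕ) : ZMod p) = -(q.2 : ZMod p) := cast_sub_self (by omega)
    rw [e1, e2]
    rw [show -(q.1 : ZMod p) + -(q.2 : ZMod p) = -((q.1 : ZMod p) + (q.2 : ZMod p)) by ring]
    rw [inv_neg, inv_neg, inv_neg]
    ring

end Aux

/-! ### The symmetrized triple sum -/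

noncomputable def Spoly (p : ℕ) : Polynomial (ZMod p) :=
  ∑ a ∈ Ico 1 p, ∑ b ∈ Ico 1 p, ∑ c ∈ Ico 1 p,
    C ((a : ZMod p)⁻¹ * ((a : ZMod p) + (b : ZMod p))⁻¹
        * ((a : ZMod p) + (b : ZMod p) + (c : ZMod p))⁻¹) * X ^ (a + b + c)

lemma OY_eq (p : ℕ) (hp : p.Prime) : OY111 p X = Spoly p := by
  haveI : Fact p.Prime := ⟨hp⟩
  unfold OY111 Spoly
  apply Finset.sum_congr rfl; intro a _
  apply Finset.sum_congr rfl; intro b _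
  apply Finset.sum_congr rfl; intro c _
  by_cases hcond : ¬ p ∣ a ∧ ¬ p ∣ (a + b) ∧ ¬ p ∣ (a + b + c)
  · rw [if_pos hcond]
    congr 2
    push_cast
    ring
  · rw [if_neg hcond]
    rw [not_and_or, not_and_or, not_not, not_not, not_not] at hcond
    symm
    rcases hcond with h | h | h
    · have : (a : ZMod p) = 0 := (ZMod.natCast_eq_zero_iff _ _).mpr h
      simp [this]
    · have h0 : ((a + b : ℕ) : ZMod p) = 0 := (ZMod.natCast_eq_zero_iff _ _).mpr h
      push_cast at h0
      simp [h0]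
    · have h0 : ((a + b + c : ℕ) : ZMod p) = 0 := (ZMod.natCast_eq_zero_iff _ _).mpr h
      push_cast at h0
      rw [show (a : ZMod p) + (b : ZMod p) + (c : ZMod p) = 0 from h0]
      simp

lemma term1 (p : ℕ) :
    ∑ a ∈ Ico 1 p, ∑ b ∈ Ico 1 p, ∑ c ∈ Ico 1 p,
      C ((a : ZMod p)⁻¹ * (b : ZMod p)⁻¹ * (c : ZMod p)⁻¹) * X ^ (a + b + c) = L1 p ^ 3 := by
  rw [show L1 p ^ 3 = L1 p * L1 p * L1 p by ring]
  rw [L1]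
  simp only [Finset.sum_mul, Finset.mul_sum]
  apply Finset.sum_congr rfl; intro a _
  apply Finset.sum_congr rfl; intro b _
  apply Finset.sum_congr rfl; intro c _
  simp only [C_mul, pow_add]
  ring

lemma Tab (p : ℕ) (hp : p.Prime) (h3 : 3 < p) :
    ∑ a ∈ Ico 1 p, ∑ b ∈ Ico 1 p, ∑ c ∈ Ico 1 p,
      C (((a : ZMod p) + (b : ZMod p) + (c : ZMod p))⁻¹
          * (if (a : ZMod p) + (b : ZMod p) = 0 then (a : ZMod p)⁻¹ * (b : ZMod p)⁻¹ else 0))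
        * X ^ (a + b + c) = 0 := by
  haveI : Fact p.Prime := ⟨hp⟩
  set Mp : Polynomial (ZMod p) := ∑ c ∈ Ico 1 p, C ((c : ZMod p)⁻¹) * X ^ (p + c) with hMp
  have hb : ∀ a ∈ Ico 1 p, ∀ b ∈ Ico 1 p,
      (∑ c ∈ Ico 1 p, C (((a : ZMod p) + (b : ZMod p) + (c : ZMod p))⁻¹
          * (if (a : ZMod p) + (b : ZMod p) = 0 then (a : ZMod p)⁻¹ * (b : ZMod p)⁻¹ else 0))
        * X ^ (a + b + c))
      = if (a : ZMod p) + (b : ZMod p) = 0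
          then C ((a : ZMod p)⁻¹ * (b : ZMod p)⁻¹) * Mp else 0 := by
    intro a ha b hbm
    simp only [mem_Ico] at ha hbm
    by_cases hAB : (a : ZMod p) + (b : ZMod p) = 0
    · have hdvd : p ∣ a + b := by
        rw [← ZMod.natCast_eq_zero_iff]
        push_cast
        exact hAB
      have hab : a + b = p := window1 hdvd (by omega) (by omega)
      rw [hMp, Finset.mul_sum, if_pos hAB, if_pos hAB]
      apply Finset.sum_congr rfl
      intro c _
      rw [hAB, zero_add, hab]
      rw [C_mul, C_mul]
      ring
    · rw [if_neg hAB, if_neg hAB]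
      apply Finset.sum_eq_zero
      intro c _
      simp
  rw [Finset.sum_congr rfl (fun a ha => Finset.sum_congr rfl (fun b hbm => hb a ha b hbm))]
  have hcol : ∀ a ∈ Ico 1 p,
      (∑ b ∈ Ico 1 p, if (a : ZMod p) + (b : ZMod p) = 0
          then C ((a : ZMod p)⁻¹ * (b : ZMod p)⁻¹) * Mp else 0)
      = C (-((a : ZMod p)⁻¹ * (a : ZMod p)⁻¹)) * Mp := by
    intro a ha
    simp only [mem_Ico] at ha
    rw [Finset.sum_eq_single_of_mem (p - a) (by simp only [mem_Ico]; omega)]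
    · have ep : ((p - a : ℕ) : ZMod p) = -(a : ZMod p) := cast_sub_self (by omega)
      rw [ep, if_pos (by ring)]
      rw [inv_neg]
      congr 1
      ring
    · intro b hbm hne
      simp only [mem_Ico] at hbm
      rw [if_neg]
      intro hAB
      have hdvd : p ∣ a + b := by
        rw [← ZMod.natCast_eq_zero_iff]
        push_cast
        exact hAB
      have := window1 hdvd (by omega) (by omega)
      omega
  rw [Finset.sum_congr rfl hcol, ← Finset.sum_mul, sum_neg_inv_sq hp h3, zero_mul]

lemma Tbc (p : ℕ) (hp : p.Prime) (h3 : 3 < p) :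
    ∑ a ∈ Ico 1 p, ∑ b ∈ Ico 1 p, ∑ c ∈ Ico 1 p,
      C (((a : ZMod p) + (b : ZMod p) + (c : ZMod p))⁻¹
          * (if (b : ZMod p) + (c : ZMod p) = 0 then (b : ZMod p)⁻¹ * (c : ZMod p)⁻¹ else 0))
        * X ^ (a + b + c) = 0 := by
  haveI : Fact p.Prime := ⟨hp⟩
  apply Finset.sum_eq_zero
  intro a ham
  have hc : ∀ b ∈ Ico 1 p,
      (∑ c ∈ Ico 1 p, C (((a : ZMod p) + (b : ZMod p) + (c : ZMod p))⁻¹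
          * (if (b : ZMod p) + (c : ZMod p) = 0 then (b : ZMod p)⁻¹ * (c : ZMod p)⁻¹ else 0))
        * X ^ (a + b + c))
      = C (-((b : ZMod p)⁻¹ * (b : ZMod p)⁻¹)) * (C ((a : ZMod p)⁻¹) * X ^ (a + p)) := by
    intro b hbm
    simp only [mem_Ico] at hbm
    rw [Finset.sum_eq_single_of_mem (p - b) (by simp only [mem_Ico]; omega)]
    · have ep : ((p - b : ℕ) : ZMod p) = -(b : ZMod p) := cast_sub_self (by omega)
      rw [ep, if_pos (by ring : (b : ZMod p) + -(b : ZMod p) = 0)]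
      rw [show a + b + (p - b) = a + p from by omega]
      rw [show ((a : ZMod p) + (b : ZMod p) + -(b : ZMod p)) = (a : ZMod p) from by ring]
      simp only [inv_neg, C_neg, C_mul]
      ring
    · intro c hcm hne
      simp only [mem_Ico] at hcm
      have hcond : ¬((b : ZMod p) + (c : ZMod p) = 0) := by
        intro hBC
        have hdvd : p ∣ b + c := by
          rw [← ZMod.natCast_eq_zero_iff]; push_cast; exact hBC
        have := window1 hdvd (by omega) (by omega)
        omega
      rw [if_neg hcond]
      simp
  rw [Finset.sum_congr rfl hc, ← Finset.sum_mul, sum_neg_inv_sq hp h3, zero_mul]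

lemma Tac (p : ℕ) (hp : p.Prime) (h3 : 3 < p) :
    ∑ a ∈ Ico 1 p, ∑ b ∈ Ico 1 p, ∑ c ∈ Ico 1 p,
      C (((a : ZMod p) + (b : ZMod p) + (c : ZMod p))⁻¹
          * (if (a : ZMod p) + (c : ZMod p) = 0 then (a : ZMod p)⁻¹ * (c : ZMod p)⁻¹ else 0))
        * X ^ (a + b + c) = 0 := by
  haveI : Fact p.Prime := ⟨hp⟩
  have hbc : ∀ a ∈ Ico 1 p,
      (∑ b ∈ Ico 1 p, ∑ c ∈ Ico 1 p, C (((a : ZMod p) + (b : ZMod p) + (c : ZMod p))⁻¹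
          * (if (a : ZMod p) + (c : ZMod p) = 0 then (a : ZMod p)⁻¹ * (c : ZMod p)⁻¹ else 0))
        * X ^ (a + b + c))
      = C (-((a : ZMod p)⁻¹ * (a : ZMod p)⁻¹))
          * (∑ b ∈ Ico 1 p, C ((b : ZMod p)⁻¹) * X ^ (b + p)) := by
    intro a ham
    simp only [mem_Ico] at ham
    have hc : ∀ b ∈ Ico 1 p,
        (∑ c ∈ Ico 1 p, C (((a : ZMod p) + (b : ZMod p) + (c : ZMod p))⁻¹
            * (if (a : ZMod p) + (c : ZMod p) = 0 then (a : ZMod p)⁻¹ * (c : ZMod p)⁻¹ else 0))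
          * X ^ (a + b + c))
        = C (-((a : ZMod p)⁻¹ * (a : ZMod p)⁻¹)) * (C ((b : ZMod p)⁻¹) * X ^ (b + p)) := by
      intro b hbm
      simp only [mem_Ico] at hbm
      rw [Finset.sum_eq_single_of_mem (p - a) (by simp only [mem_Ico]; omega)]
      · have ep : ((p - a : ℕ) : ZMod p) = -(a : ZMod p) := cast_sub_self (by omega)
        rw [ep, if_pos (by ring : (a : ZMod p) + -(a : ZMod p) = 0)]
        rw [show a + b + (p - a) = b + p from by omega]
        rw [show ((a : ZMod p) + (b : ZMod p) + -(a : ZMod p)) = (b : ZMod p) from by ring]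
        simp only [inv_neg, C_neg, C_mul]
        ring
      · intro c hcm hne
        simp only [mem_Ico] at hcm
        have hcond : ¬((a : ZMod p) + (c : ZMod p) = 0) := by
          intro hAC
          have hdvd : p ∣ a + c := by
            rw [← ZMod.natCast_eq_zero_iff]; push_cast; exact hAC
          have := window1 hdvd (by omega) (by omega)
          omega
        rw [if_neg hcond]
        simp
    rw [Finset.sum_congr rfl hc, ← Finset.mul_sum]
  rw [Finset.sum_congr rfl hbc, ← Finset.sum_mul, sum_neg_inv_sq hp h3, zero_mul]

lemma term3 (p : ℕ) (hp : p.Prime) (h3 : 3 < p) :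
    ∑ a ∈ Ico 1 p, ∑ b ∈ Ico 1 p, ∑ c ∈ Ico 1 p,
      C (((a : ZMod p) + (b : ZMod p) + (c : ZMod p))⁻¹
          * ((if (a : ZMod p) + (b : ZMod p) = 0 then (a : ZMod p)⁻¹ * (b : ZMod p)⁻¹ else 0)
            + (if (b : ZMod p) + (c : ZMod p) = 0 then (b : ZMod p)⁻¹ * (c : ZMod p)⁻¹ else 0)
            + (if (a : ZMod p) + (c : ZMod p) = 0 then (a : ZMod p)⁻¹ * (c : ZMod p)⁻¹ else 0)))
        * X ^ (a + b + c) = 0 := by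
  have hsplit : ∀ a b c : ℕ,
      (C (((a : ZMod p) + (b : ZMod p) + (c : ZMod p))⁻¹
          * ((if (a : ZMod p) + (b : ZMod p) = 0 then (a : ZMod p)⁻¹ * (b : ZMod p)⁻¹ else 0)
            + (if (b : ZMod p) + (c : ZMod p) = 0 then (b : ZMod p)⁻¹ * (c : ZMod p)⁻¹ else 0)
            + (if (a : ZMod p) + (c : ZMod p) = 0 then (a : ZMod p)⁻¹ * (c : ZMod p)⁻¹ else 0)))
        * X ^ (a + b + c) : Polynomial (ZMod p))
      = C (((a : ZMod p) + (b : ZMod p) + (c : ZMod p))⁻¹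
            * (if (a : ZMod p) + (b : ZMod p) = 0 then (a : ZMod p)⁻¹ * (b : ZMod p)⁻¹ else 0))
          * X ^ (a + b + c)
        + C (((a : ZMod p) + (b : ZMod p) + (c : ZMod p))⁻¹
            * (if (b : ZMod p) + (c : ZMod p) = 0 then (b : ZMod p)⁻¹ * (c : ZMod p)⁻¹ else 0))
          * X ^ (a + b + c)
        + C (((a : ZMod p) + (b : ZMod p) + (c : ZMod p))⁻¹
            * (if (a : ZMod p) + (c : ZMod p) = 0 then (a : ZMod p)⁻¹ * (c : ZMod p)⁻¹ else 0))
          * X ^ (a + b + c) := by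
    intro a b c
    rw [mul_add, mul_add, map_add, map_add, add_mul, add_mul]
  simp only [hsplit, Finset.sum_add_distrib]
  rw [Tab p hp h3, Tbc p hp h3, Tac p hp h3]
  simp

lemma term2 (p : ℕ) (hp : p.Prime) (h3 : 3 < p) :
    ∑ a ∈ Ico 1 p, ∑ b ∈ Ico 1 p, ∑ c ∈ Ico 1 p,
      C (if (a : ZMod p) + (b : ZMod p) + (c : ZMod p) = 0
          then (a : ZMod p)⁻¹ * (b : ZMod p)⁻¹ * (c : ZMod p)⁻¹ else 0) * X ^ (a + b + c)
    = -(C (2 * Z12 p) * X ^ p) + C (2 * Z12 p) * X ^ (2 * p) := by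
  haveI : Fact p.Prime := ⟨hp⟩
  have hcol : ∀ a ∈ Ico 1 p, ∀ b ∈ Ico 1 p,
      (∑ c ∈ Ico 1 p, C (if (a : ZMod p) + (b : ZMod p) + (c : ZMod p) = 0
          then (a : ZMod p)⁻¹ * (b : ZMod p)⁻¹ * (c : ZMod p)⁻¹ else 0) * X ^ (a + b + c))
      = (if a + b < p
          then -(C ((a : ZMod p)⁻¹ * (b : ZMod p)⁻¹ * ((a : ZMod p) + (b : ZMod p))⁻¹) * X ^ p)
          else 0)
        + (if p < a + b
          then -(C ((a : ZMod p)⁻¹ * (b : ZMod p)⁻¹ * ((a : ZMod p) + (b : ZMod p))⁻¹)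
              * X ^ (2 * p))
          else 0) := by
    intro a ha b hb
    simp only [mem_Ico] at ha hb
    rcases Nat.lt_trichotomy (a + b) p with h | h | h
    · rw [if_pos h, if_neg (by omega), add_zero]
      rw [Finset.sum_eq_single_of_mem (p - (a + b)) (by simp only [mem_Ico]; omega)]
      · have ep : ((p - (a + b) : ℕ) : ZMod p) = -((a : ZMod p) + (b : ZMod p)) := by
          rw [cast_sub_self (le_of_lt h)]; push_cast; ring
        rw [ep, if_pos (by ring : (a : ZMod p) + (b : ZMod p) + -((a : ZMod p) + (b : ZMod p)) = 0)]
        rw [show a + b + (p - (a + b)) = p from by omega]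
        simp only [inv_neg, C_neg, C_mul]
        ring
      · intro c hc hne
        simp only [mem_Ico] at hc
        have hcond : ¬((a : ZMod p) + (b : ZMod p) + (c : ZMod p) = 0) := by
          intro hz
          have hdvd : p ∣ a + b + c := by
            rw [← ZMod.natCast_eq_zero_iff]; push_cast; exact hz
          have := window1 hdvd (by omega) (by omega)
          omega
        rw [if_neg hcond]
        simp
    · rw [if_neg (by omega), if_neg (by omega), add_zero]
      apply Finset.sum_eq_zero
      intro c hc
      simp only [mem_Ico] at hc
      have hcond : ¬((a : ZMod p) + (b : ZMod p) + (c : ZMod p) = 0) := by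
        intro hz
        have hdvd : p ∣ a + b + c := by
          rw [← ZMod.natCast_eq_zero_iff]; push_cast; exact hz
        have : p ∣ c := (Nat.dvd_add_right (h ▸ dvd_refl p)).mp hdvd
        have := Nat.le_of_dvd (by omega) this
        omega
      rw [if_neg hcond]
      simp
    · rw [if_neg (by omega), if_pos h, zero_add]
      rw [Finset.sum_eq_single_of_mem (2 * p - (a + b)) (by simp only [mem_Ico]; omega)]
      · have ep : ((2 * p - (a + b) : ℕ) : ZMod p) = -((a : ZMod p) + (b : ZMod p)) := by
          rw [Nat.cast_sub (by omega)]
          push_cast [ZMod.natCast_self]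
          ring
        rw [ep, if_pos (by ring : (a : ZMod p) + (b : ZMod p) + -((a : ZMod p) + (b : ZMod p)) = 0)]
        rw [show a + b + (2 * p - (a + b)) = 2 * p from by omega]
        simp only [inv_neg, C_neg, C_mul]
        ring
      · intro c hc hne
        simp only [mem_Ico] at hc
        have hcond : ¬((a : ZMod p) + (b : ZMod p) + (c : ZMod p) = 0) := by
          intro hz
          have hdvd : p ∣ a + b + c := by
            rw [← ZMod.natCast_eq_zero_iff]; push_cast; exact hz
          have := window2 hdvd (by omega) (by omega)
          omega
        rw [if_neg hcond]
        simp
  rw [Finset.sum_congr rfl (fun a ha => Finset.sum_congr rfl (fun b hb => hcol a ha b hb))]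
  rw [← Finset.sum_product']
  rw [Finset.sum_add_distrib]
  have e1 : ∑ q ∈ Ico 1 p ×ˢ Ico 1 p,
      (if q.1 + q.2 < p
        then -(C ((q.1 : ZMod p)⁻¹ * (q.2 : ZMod p)⁻¹ * ((q.1 : ZMod p) + (q.2 : ZMod p))⁻¹)
            * X ^ p)
        else 0)
      = -(C (2 * Z12 p) * X ^ p) := by
    rw [← Finset.sum_filter]
    rw [show (∑ q ∈ (Ico 1 p ×ˢ Ico 1 p).filter (fun q => q.1 + q.2 < p),
        -(C ((q.1 : ZMod p)⁻¹ * (q.2 : ZMod p)⁻¹ * ((q.1 : ZMod p) + (q.2 : ZMod p))⁻¹) * X ^ p))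
        = -((∑ q ∈ (Ico 1 p ×ˢ Ico 1 p).filter (fun q => q.1 + q.2 < p),
          C ((q.1 : ZMod p)⁻¹ * (q.2 : ZMod p)⁻¹ * ((q.1 : ZMod p) + (q.2 : ZMod p))⁻¹)) * X ^ p)
        from by rw [Finset.sum_mul, Finset.sum_neg_distrib]]
    rw [← map_sum, W_lt p hp]
  have e2 : ∑ q ∈ Ico 1 p ×ˢ Ico 1 p,
      (if p < q.1 + q.2
        then -(C ((q.1 : ZMod p)⁻¹ * (q.2 : ZMod p)⁻¹ * ((q.1 : ZMod p) + (q.2 : ZMod p))⁻¹)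
            * X ^ (2 * p))
        else 0)
      = C (2 * Z12 p) * X ^ (2 * p) := by
    rw [← Finset.sum_filter]
    rw [show (∑ q ∈ (Ico 1 p ×ˢ Ico 1 p).filter (fun q => p < q.1 + q.2),
        -(C ((q.1 : ZMod p)⁻¹ * (q.2 : ZMod p)⁻¹ * ((q.1 : ZMod p) + (q.2 : ZMod p))⁻¹)
          * X ^ (2 * p)))
        = -((∑ q ∈ (Ico 1 p ×ˢ Ico 1 p).filter (fun q => p < q.1 + q.2),
          C ((q.1 : ZMod p)⁻¹ * (q.2 : ZMod p)⁻¹ * ((q.1 : ZMod p) + (q.2 : ZMod p))⁻¹))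
            * X ^ (2 * p))
        from by rw [Finset.sum_mul, Finset.sum_neg_distrib]]
    rw [← map_sum, W_gt p hp]
    simp only [map_neg, C_neg]
    ring
  rw [e1, e2]

lemma six_S (p : ℕ) (hp : p.Prime) (h3 : 3 < p) :
    C (6 : ZMod p) * Spoly p
    = (∑ a ∈ Ico 1 p, ∑ b ∈ Ico 1 p, ∑ c ∈ Ico 1 p,
        C ((a : ZMod p)⁻¹ * (b : ZMod p)⁻¹ * (c : ZMod p)⁻¹) * X ^ (a + b + c))
      - (∑ a ∈ Ico 1 p, ∑ b ∈ Ico 1 p, ∑ c ∈ Ico 1 p,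
        C (if (a : ZMod p) + (b : ZMod p) + (c : ZMod p) = 0
            then (a : ZMod p)⁻¹ * (b : ZMod p)⁻¹ * (c : ZMod p)⁻¹ else 0) * X ^ (a + b + c))
      - (∑ a ∈ Ico 1 p, ∑ b ∈ Ico 1 p, ∑ c ∈ Ico 1 p,
        C (((a : ZMod p) + (b : ZMod p) + (c : ZMod p))⁻¹
            * ((if (a : ZMod p) + (b : ZMod p) = 0 then (a : ZMod p)⁻¹ * (b : ZMod p)⁻¹ else 0)
              + (if (b : ZMod p) + (c : ZMod p) = 0 then (b : ZMod p)⁻¹ * (c : ZMod p)⁻¹ else 0)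
              + (if (a : ZMod p) + (c : ZMod p) = 0 then (a : ZMod p)⁻¹ * (c : ZMod p)⁻¹ else 0)))
          * X ^ (a + b + c)) := by
  haveI : Fact p.Prime := ⟨hp⟩
  set t : ℕ → ℕ → ℕ → Polynomial (ZMod p) := fun a b c =>
    C ((a : ZMod p)⁻¹ * ((a : ZMod p) + (b : ZMod p))⁻¹
        * ((a : ZMod p) + (b : ZMod p) + (c : ZMod p))⁻¹) * X ^ (a + b + c) with ht
  have hSp : Spoly p = ∑ a ∈ Ico 1 p, ∑ b ∈ Ico 1 p, ∑ c ∈ Ico 1 p, t a b c := rfl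
  calc C (6 : ZMod p) * Spoly p
      = Spoly p + Spoly p + Spoly p + Spoly p + Spoly p + Spoly p := by
        rw [show (C (6 : ZMod p) : Polynomial (ZMod p)) = 6 from map_ofNat C 6]; ring
    _ = (∑ a ∈ Ico 1 p, ∑ b ∈ Ico 1 p, ∑ c ∈ Ico 1 p, t a b c)
        + (∑ a ∈ Ico 1 p, ∑ b ∈ Ico 1 p, ∑ c ∈ Ico 1 p, t b a c)
        + (∑ a ∈ Ico 1 p, ∑ b ∈ Ico 1 p, ∑ c ∈ Ico 1 p, t a c b)
        + (∑ a ∈ Ico 1 p, ∑ b ∈ Ico 1 p, ∑ c ∈ Ico 1 p, t c a b)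
        + (∑ a ∈ Ico 1 p, ∑ b ∈ Ico 1 p, ∑ c ∈ Ico 1 p, t b c a)
        + (∑ a ∈ Ico 1 p, ∑ b ∈ Ico 1 p, ∑ c ∈ Ico 1 p, t c b a) := by
        rw [hSp, ← sum3_swap12 (Ico 1 p) t, ← sum3_swap23 (Ico 1 p) t,
          ← sum3_cycle2 (Ico 1 p) t, ← sum3_cycle (Ico 1 p) t, ← sum3_swap13 (Ico 1 p) t]
    _ = ∑ a ∈ Ico 1 p, ∑ b ∈ Ico 1 p, ∑ c ∈ Ico 1 p,
        (t a b c + t b a c + t a c b + t c a b + t b c a + t c b a) := by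
        simp only [← Finset.sum_add_distrib]
    _ = ∑ a ∈ Ico 1 p, ∑ b ∈ Ico 1 p, ∑ c ∈ Ico 1 p,
        (C ((a : ZMod p)⁻¹ * (b : ZMod p)⁻¹ * (c : ZMod p)⁻¹) * X ^ (a + b + c)
          - C (if (a : ZMod p) + (b : ZMod p) + (c : ZMod p) = 0
              then (a : ZMod p)⁻¹ * (b : ZMod p)⁻¹ * (c : ZMod p)⁻¹ else 0) * X ^ (a + b + c)
          - C (((a : ZMod p) + (b : ZMod p) + (c : ZMod p))⁻¹
              * ((if (a : ZMod p) + (b : ZMod p) = 0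
                    then (a : ZMod p)⁻¹ * (b : ZMod p)⁻¹ else 0)
                + (if (b : ZMod p) + (c : ZMod p) = 0
                    then (b : ZMod p)⁻¹ * (c : ZMod p)⁻¹ else 0)
                + (if (a : ZMod p) + (c : ZMod p) = 0
                    then (a : ZMod p)⁻¹ * (c : ZMod p)⁻¹ else 0)))
            * X ^ (a + b + c)) := by
        apply Finset.sum_congr rfl; intro a ha
        apply Finset.sum_congr rfl; intro b hb
        apply Finset.sum_congr rfl; intro c hc
        have hA := cast_ne_zero_of_mem ha
        have hB := cast_ne_zero_of_mem hb
        have hC := cast_ne_zero_of_mem hc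
        simp only [ht]
        rw [show b + a + c = a + b + c from by omega, show a + c + b = a + b + c from by omega,
          show c + a + b = a + b + c from by omega, show b + c + a = a + b + c from by omega,
          show c + b + a = a + b + c from by omega]
        rw [← add_mul, ← add_mul, ← add_mul, ← add_mul, ← add_mul]
        rw [← map_add, ← map_add, ← map_add, ← map_add, ← map_add]
        rw [key_id _ _ _ hA hB hC]
        rw [map_sub, map_sub, sub_mul, sub_mul]
    _ = _ := by
        simp only [Finset.sum_sub_distrib]

theorem OY111_formula (p : ℕ) (hp : p.Prime) (h3 : 3 < p) :
    OY111 p X = C ((6 : ZMod p)⁻¹) * (L1 p) ^ 3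
      + C ((3 : ZMod p)⁻¹ * Z12 p) * X ^ p * (1 - X) ^ p := by
  haveI : Fact p.Prime := ⟨hp⟩
  have h6 : (6 : ZMod p) ≠ 0 := by
    intro h0
    rw [show (6 : ZMod p) = ((6 : ℕ) : ZMod p) from by norm_num,
      ZMod.natCast_eq_zero_iff] at h0
    have hle := Nat.le_of_dvd (by norm_num) h0
    interval_cases p <;> first | omega | exact absurd hp (by norm_num)
  have h2 : (2 : ZMod p) ≠ 0 := by
    intro h0
    rw [show (2 : ZMod p) = ((2 : ℕ) : ZMod p) from by norm_num,
      ZMod.natCast_eq_zero_iff] at h0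
    have hle := Nat.le_of_dvd (by norm_num) h0
    omega
  have big : C (6 : ZMod p) * OY111 p X
      = L1 p ^ 3 + C (2 * Z12 p) * X ^ p - C (2 * Z12 p) * X ^ (2 * p) := by
    rw [OY_eq p hp, six_S p hp h3, term1, term2 p hp h3, term3 p hp h3]
    ring
  have hfrob : ((1 : Polynomial (ZMod p)) - X) ^ p = 1 - X ^ p := by
    rw [sub_pow_char]
    simp
  have hX : X ^ p * ((1 : Polynomial (ZMod p)) - X) ^ p = X ^ p - X ^ (2 * p) := by
    rw [hfrob, mul_sub, mul_one, ← pow_add, two_mul]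
  have hcoef : (6 : ZMod p)⁻¹ * (2 * Z12 p) = (3 : ZMod p)⁻¹ * Z12 p := by
    rw [show (6 : ZMod p) = 2 * 3 from by norm_num, mul_inv]
    rw [show (2 : ZMod p)⁻¹ * (3 : ZMod p)⁻¹ * (2 * Z12 p)
        = ((2 : ZMod p)⁻¹ * 2) * ((3 : ZMod p)⁻¹ * Z12 p) from by ring]
    rw [inv_mul_cancel₀ h2, one_mul]
  calc OY111 p X = C ((6 : ZMod p)⁻¹) * (C (6 : ZMod p) * OY111 p X) := by
        rw [← mul_assoc, ← C_mul, inv_mul_cancel₀ h6, C_1, one_mul]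
    _ = C ((6 : ZMod p)⁻¹)
          * (L1 p ^ 3 + C (2 * Z12 p) * X ^ p - C (2 * Z12 p) * X ^ (2 * p)) := by
        rw [big]
    _ = C ((6 : ZMod p)⁻¹) * L1 p ^ 3
          + C ((6 : ZMod p)⁻¹ * (2 * Z12 p)) * (X ^ p - X ^ (2 * p)) := by
        simp only [C_mul]; ring
    _ = C ((6 : ZMod p)⁻¹) * L1 p ^ 3
          + C ((3 : ZMod p)⁻¹ * Z12 p) * (X ^ p - X ^ (2 * p)) := by
        rw [hcoef]
    _ = _ := by rw [← hX]; ring
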